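/- Let S be a nonempty set and let ℱ be a linearly independent family of real-valued functions on S. Let f₁, …, f_D and f̂₁, …, f̂_D be members of ℱ, each list consisting of pairwise distinct functions. Let Z, Ẑ : {1,…,D} × {1,…,T} → ℝ be latent time series such that for every d there exists t with Z_{d,t} ≠ 0, and likewise for Ẑ (non-degeneracy). If for every ℓ ∈ S and every t ∈ {1,…,T} we have Σ_{j=1}^D f_j(ℓ) Z_{j,t} = Σ_{j=1}^D f̂_j(ℓ) Ẑ_{j,t}, then there exists a permutation σ of {1,…,D} such that f̂_j = f_{σ(j)} and Ẑ_{j,t} = Z_{σ(j),t} for all j and t. -/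
import Mathlib


/-- **Identifiability of linear SFPs, deterministic core (Theorem 1).**
If the spatial factors `f j`, `fh j` are pairwise-distinct members of a linearly
independent family `ℱ` of real-valued functions on `S`, the latent time series
`Z`, `Zh` are non-degenerate (no row identically zero), and the noiseless
observation fields coincide at every location and time, then the factors and
latent series coincide up to a permutation. -/
theorem linear_sfp_identifiability {S : Type*} [Nonempty S]
    (ℱ : Set (S → ℝ))
    (hli : LinearIndependent ℝ (fun φ : ℱ => (φ : S → ℝ)))
    (D T : ℕ) (f fh : Fin D → S → ℝ)
    (hf : ∀ j, f j ∈ ℱ) (hfh : ∀ j, fh j ∈ ℱ)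
    (hfinj : Function.Injective f) (hfhinj : Function.Injective fh)
    (Z Zh : Fin D → Fin T → ℝ)
    (hZ : ∀ d, ∃ t, Z d t ≠ 0) (hZh : ∀ d, ∃ t, Zh d t ≠ 0)
    (heq : ∀ (ℓ : S) (t : Fin T), ∑ j, f j ℓ * Z j t = ∑ j, fh j ℓ * Zh j t) :
    ∃ σ : Equiv.Perm (Fin D), ∀ j, fh j = f (σ j) ∧ ∀ t, Zh j t = Z (σ j) t := by
  classical
  set e : Fin D → ℱ := fun j => ⟨f j, hf j⟩ with he
  set eh : Fin D → ℱ := fun j => ⟨fh j, hfh j⟩ with heh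
  have heinj : Function.Injective e := fun a b hab => hfinj (congrArg Subtype.val hab)
  have hehinj : Function.Injective eh := fun a b hab => hfhinj (congrArg Subtype.val hab)
  set s : Finset ℱ := Finset.univ.image e ∪ Finset.univ.image eh with hs
  -- key coefficient identity
  have key : ∀ (t : Fin T) (φ : ℱ),
      (∑ j, if e j = φ then Z j t else 0) = (∑ j, if eh j = φ then Zh j t else 0) := by
    intro t φ
    set g : ℱ → ℝ := fun ψ =>
      (∑ j, if e j = ψ then Z j t else 0) - (∑ j, if eh j = ψ then Zh j t else 0) with hg
    have hsum : ∑ ψ ∈ s, g ψ • (ψ : S → ℝ) = 0 := by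
      have h1 : ∀ (u : Fin D → ℱ) (c : Fin D → ℝ), (∀ j, u j ∈ s) →
          ∑ ψ ∈ s, (∑ j, if u j = ψ then c j else 0) • (ψ : S → ℝ)
            = ∑ j, c j • (u j : S → ℝ) := by
        intro u c hu
        simp_rw [Finset.sum_smul]
        rw [Finset.sum_comm]
        refine Finset.sum_congr rfl fun j _ => ?_
        rw [show (fun ψ : ℱ => (if u j = ψ then c j else 0) • (ψ : S → ℝ))
            = fun ψ : ℱ => (if u j = ψ then c j • (ψ : S → ℝ) else 0) from ?_]
        · rw [Finset.sum_ite_eq s (u j) (fun ψ : ℱ => c j • (ψ : S → ℝ)), if_pos (hu j)]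
        · funext ψ; split <;> simp
      have hA : ∀ j, e j ∈ s := fun j => Finset.mem_union_left _ (Finset.mem_image_of_mem e (Finset.mem_univ j))
      have hB : ∀ j, eh j ∈ s := fun j => Finset.mem_union_right _ (Finset.mem_image_of_mem eh (Finset.mem_univ j))
      simp only [hg, sub_smul, Finset.sum_sub_distrib]
      rw [h1 e (fun j => Z j t) hA, h1 eh (fun j => Zh j t) hB]
      funext ℓ
      simp only [Finset.sum_apply, Pi.sub_apply, Pi.smul_apply, smul_eq_mul, Pi.zero_apply]
      have h := heq ℓ t
      rw [sub_eq_zero]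
      calc ∑ j, Z j t * f j ℓ = ∑ j, f j ℓ * Z j t := by
            exact Finset.sum_congr rfl fun j _ => mul_comm _ _
        _ = ∑ j, fh j ℓ * Zh j t := h
        _ = ∑ j, Zh j t * fh j ℓ := Finset.sum_congr rfl fun j _ => mul_comm _ _
    have hz : ∀ ψ ∈ s, g ψ = 0 := linearIndependent_iff'.mp hli s g hsum
    by_cases hφ : φ ∈ s
    · have := hz φ hφ; simpa [hg, sub_eq_zero] using this
    · have l1 : (∑ j, if e j = φ then Z j t else 0) = 0 := by
        apply Finset.sum_eq_zero; intro j _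
        rw [if_neg]; intro h; exact hφ (h ▸ Finset.mem_union_left _ (Finset.mem_image_of_mem e (Finset.mem_univ j)))
      have l2 : (∑ j, if eh j = φ then Zh j t else 0) = 0 := by
        apply Finset.sum_eq_zero; intro j _
        rw [if_neg]; intro h; exact hφ (h ▸ Finset.mem_union_right _ (Finset.mem_image_of_mem eh (Finset.mem_univ j)))
      rw [l1, l2]
  -- every eh j is in the range of e
  have hexist : ∀ j, ∃ k, e k = eh j := by
    intro j
    by_contra hcon
    push_neg at hcon
    obtain ⟨t, ht⟩ := hZh j
    have := key t (eh j)
    have l1 : (∑ k, if e k = eh j then Z k t else 0) = 0 :=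
      Finset.sum_eq_zero fun k _ => if_neg (hcon k)
    have l2 : (∑ k, if eh k = eh j then Zh k t else 0) = Zh j t := by
      rw [Finset.sum_eq_single j]
      · simp
      · intro k _ hk; exact if_neg (fun h => hk (hehinj h))
      · simp
    rw [l1, l2] at this
    exact ht this.symm
  choose σ0 hσ0 using hexist
  have hσ0f : ∀ j, f (σ0 j) = fh j := fun j => congrArg Subtype.val (hσ0 j)
  have hσ0inj : Function.Injective σ0 := by
    intro a b hab
    exact hfhinj (by rw [← hσ0f a, ← hσ0f b, hab])
  refine ⟨Equiv.ofBijective σ0 ((Finite.injective_iff_bijective).mp hσ0inj), fun j => ?_⟩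
  refine ⟨(hσ0f j).symm, fun t => ?_⟩
  have := key t (eh j)
  have l1 : (∑ k, if e k = eh j then Z k t else 0) = Z (σ0 j) t := by
    rw [Finset.sum_eq_single (σ0 j)]
    · rw [if_pos (hσ0 j)]
    · intro k _ hk
      refine if_neg fun h => hk ?_
      exact heinj (h.trans (hσ0 j).symm)
    · simp
  have l2 : (∑ k, if eh k = eh j then Zh k t else 0) = Zh j t := by
    rw [Finset.sum_eq_single j]
    · simp
    · intro k _ hk; exact if_neg (fun h => hk (hehinj h))
    · simp
  rw [l1, l2] at this
  exact this.symm
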